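/- Let I = ⟨μ_1,…,μ_n⟩ = ⟨x_1^{d_1},…,x_n^{d_n}⟩ in K[x_1,…,x_n]. Then for every k ≥ 1, the power I^k is a good ideal if and only if I^k is a very good ideal (both notions taken with respect to the boxes associated to I^k). -/

import Mathlib

open MvPolynomial

namespace GasanovaRR

/-- The monomial `x^α` in `K[x_1,…,x_n]`. -/
noncomputable def mono (K : Type*) [Field K] {n : ℕ} (α : Fin n → ℕ) :
    MvPolynomial (Fin n) K :=
  MvPolynomial.monomial (Finsupp.equivFunOnFinite.symm α) 1

/-- `I` is a monomial ideal: it is generated by a set of monomials. -/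
def IsMonomialIdeal {K : Type*} [Field K] {n : ℕ}
    (I : Ideal (MvPolynomial (Fin n) K)) : Prop :=
  ∃ A : Set (Fin n → ℕ), I = Ideal.span (mono K '' A)

/-- `x^α` is a minimal monomial generator of `I`, i.e. `x^α ∈ G(I)`:
`x^α ∈ I` and no monomial in `I` strictly divides it. -/
def IsMinGen {K : Type*} [Field K] {n : ℕ}
    (I : Ideal (MvPolynomial (Fin n) K)) (α : Fin n → ℕ) : Prop :=
  mono K α ∈ I ∧ ∀ β : Fin n → ℕ, mono K β ∈ I → β ≤ α → β = α

/-- The point `α` lies in the box `B_{a_1,…,a_n}` (for box sizes `d_1,…,d_n`). -/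
def InBox {n : ℕ} (d a α : Fin n → ℕ) : Prop :=
  ∀ i, a i * d i ≤ α i ∧ α i ≤ (a i + 1) * d i

/-- `I` is a good ideal (w.r.t. box sizes `d`): for every `l ≥ 1`, every minimal
generator of `I^l` lies in a box whose coordinate sum is `l - 1`. -/
def IsGood {K : Type*} [Field K] {n : ℕ}
    (I : Ideal (MvPolynomial (Fin n) K)) (d : Fin n → ℕ) : Prop :=
  ∀ l : ℕ, 1 ≤ l → ∀ α : Fin n → ℕ, IsMinGen (I ^ l) α →
    ∃ a : Fin n → ℕ, InBox d a α ∧ ∑ i, a i = l - 1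

/-- `I` is an `𝔪`-primary monomial ideal whose minimal generating set contains
`μ_i = x_i^{d_i}` with `d_i > 0` for each `i`. -/
def MPrimaryWithCorners {K : Type*} [Field K] {n : ℕ}
    (I : Ideal (MvPolynomial (Fin n) K)) (d : Fin n → ℕ) : Prop :=
  IsMonomialIdeal I ∧ I ≠ ⊤ ∧ (∀ i, 0 < d i) ∧ ∀ i, IsMinGen I (Pi.single i (d i))

/-- The ideal `I_{a_1,…,a_n}` associated to the box `B_{a_1,…,a_n}`, generated by
`m / (μ_1^{a_1}⋯μ_n^{a_n})` for `m ∈ B_{a_1,…,a_n} ∩ G(I^l)`, `l = a_1+⋯+a_n+1`. -/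
noncomputable def boxIdeal {K : Type*} [Field K] {n : ℕ}
    (I : Ideal (MvPolynomial (Fin n) K)) (d a : Fin n → ℕ) :
    Ideal (MvPolynomial (Fin n) K) :=
  Ideal.span ((fun α => mono K (α - fun i => a i * d i)) ''
    {α | InBox d a α ∧ IsMinGen (I ^ (∑ i, a i + 1)) α})

/-- The Ratliff–Rush closure `Ĩ = ⋃_{k ≥ 0} (I^{k+1} : I^k)`. -/
noncomputable def ratliffRush {K : Type*} [Field K] {n : ℕ}
    (I : Ideal (MvPolynomial (Fin n) K)) : Ideal (MvPolynomial (Fin n) K) :=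
  ⨆ k : ℕ, (I ^ (k + 1)).colon ((I ^ k : Ideal (MvPolynomial (Fin n) K)) : Set (MvPolynomial (Fin n) K))

/-- The cone in `ℕ^n` with set `S` of fixed coordinates and vertex `v`. -/
def Cone {n : ℕ} (S : Set (Fin n)) (v : Fin n → ℕ) : Set (Fin n → ℕ) :=
  {b | (∀ i ∈ S, b i = v i) ∧ ∀ i ∉ S, v i ≤ b i}

/-- `I` is a very good ideal: it is good and `I_{a_1,…,a_n} = I` for all boxes. -/
def IsVeryGood {K : Type*} [Field K] {n : ℕ}
    (I : Ideal (MvPolynomial (Fin n) K)) (d : Fin n → ℕ) : Prop :=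
  IsGood I d ∧ ∀ a : Fin n → ℕ, boxIdeal I d a = I

section Aux

variable {K : Type*} [Field K] {n : ℕ}

lemma mono_mul (α β : Fin n → ℕ) : mono K α * mono K β = mono K (α + β) := by
  have h : Finsupp.equivFunOnFinite.symm (α + β)
      = Finsupp.equivFunOnFinite.symm α + Finsupp.equivFunOnFinite.symm β := by
    ext i; simp
  simp [mono, MvPolynomial.monomial_mul, h]

lemma mono_zero : mono K (0 : Fin n → ℕ) = 1 := by
  have h : Finsupp.equivFunOnFinite.symm (0 : Fin n → ℕ) = 0 := by ext i; simp
  rw [mono, h, MvPolynomial.monomial_zero', MvPolynomial.C_1]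

lemma prod_pow_mem {R : Type*} [CommSemiring R] (I : Ideal R) {ι : Type*}
    (s : Finset ι) (x : ι → R) (c : ι → ℕ) (hx : ∀ i ∈ s, x i ∈ I) :
    (∏ i ∈ s, x i ^ c i) ∈ I ^ (∑ i ∈ s, c i) := by
  classical
  induction s using Finset.induction_on with
  | empty => simp
  | @insert _ _ h ih =>
    rw [Finset.prod_insert h, Finset.sum_insert h, pow_add]
    exact Ideal.mul_mem_mul
      (Ideal.pow_mem_pow (hx _ (Finset.mem_insert_self _ _)) _)
      (ih fun i hi => hx i (Finset.mem_insert_of_mem hi))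

lemma mono_pow (α : Fin n → ℕ) (m : ℕ) :
    mono K α ^ m = mono K (fun i => m * α i) := by
  induction m with
  | zero => simpa [Pi.zero_def] using mono_zero.symm
  | succ m ih =>
    rw [pow_succ, ih, mono_mul]
    congr 1; funext i; simp [Nat.succ_mul]

/-- the set of exponent vectors of the standard generators of `I^m`. -/
def powGens {n : ℕ} (d : Fin n → ℕ) (m : ℕ) : Set (Fin n → ℕ) :=
  {α | ∃ c : Fin n → ℕ, ∑ i, c i = m ∧ α = fun i => c i * d i}

lemma mono_cd_eq_prod (d c : Fin n → ℕ) :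
    mono K (fun i => c i * d i) = ∏ i, mono K (Pi.single i (d i)) ^ c i := by
  have h : ∀ i : Fin n, mono K (Pi.single i (d i)) ^ c i
      = mono K (fun j => c i * (Pi.single i (d i) : Fin n → ℕ) j) := by
    intro i; exact mono_pow _ _
  rw [Finset.prod_congr rfl fun i _ => h i]
  have key : ∀ s : Finset (Fin n),
      (∏ i ∈ s, mono K (fun j => c i * (Pi.single i (d i) : Fin n → ℕ) j))
        = mono K (fun j => ∑ i ∈ s, c i * (Pi.single i (d i) : Fin n → ℕ) j) := by
    intro s
    induction s using Finset.induction_on with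
    | empty => simpa [Pi.zero_def] using mono_zero.symm
    | @insert _ _ h ih =>
      rw [Finset.prod_insert h, ih, mono_mul]
      congr 1; funext j; simp [Finset.sum_insert h]
  rw [key]
  congr 1; funext j
  rw [Finset.sum_eq_single j]
  · simp
  · intro b _ hb; simp [Pi.single_apply, hb.symm]
  · intro hj; exact absurd (Finset.mem_univ j) hj

lemma span_pow_eq (d : Fin n → ℕ) (m : ℕ) :
    (Ideal.span (Set.range fun i : Fin n => mono K (Pi.single i (d i)))) ^ m
      = Ideal.span (mono K '' powGens d m) := by
  apply le_antisymm
  · induction m with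
    | zero =>
      rw [pow_zero, Ideal.one_eq_top, top_le_iff, Ideal.eq_top_iff_one]
      apply Ideal.subset_span
      refine ⟨fun i => (0 : ℕ) * d i, ⟨0, by simp, rfl⟩, ?_⟩
      have : (fun i : Fin n => (0:ℕ) * d i) = (0 : Fin n → ℕ) := by funext i; simp
      rw [this, mono_zero]
    | succ m ih =>
      rw [pow_succ]
      have h1 : (Ideal.span (Set.range fun i : Fin n => mono K (Pi.single i (d i))))
          ≤ Ideal.span (mono K '' powGens d 1) := by
        rw [Ideal.span_le]
        rintro _ ⟨i, rfl⟩
        apply Ideal.subset_span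
        refine ⟨Pi.single i (d i), ⟨Pi.single i 1, by simp, ?_⟩, rfl⟩
        funext j
        by_cases hj : j = i <;> simp [Pi.single_apply, hj]
      refine le_trans (Ideal.mul_mono ih h1) ?_
      rw [Ideal.span_mul_span', Ideal.span_le]
      rintro _ ⟨x, ⟨α, ⟨c, hc, rfl⟩, rfl⟩, y, ⟨β, ⟨c', hc', rfl⟩, rfl⟩, rfl⟩
      dsimp only
      rw [mono_mul]
      apply Ideal.subset_span
      refine ⟨_, ⟨c + c', ?_, ?_⟩, rfl⟩
      · simp only [Pi.add_apply]; rw [Finset.sum_add_distrib, hc, hc']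
      · funext j; simp [add_mul]
  · rw [Ideal.span_le]
    rintro _ ⟨α, ⟨c, hc, rfl⟩, rfl⟩
    rw [mono_cd_eq_prod]
    rw [← hc]
    exact prod_pow_mem _ _ _ _ fun i _ => Ideal.subset_span ⟨i, rfl⟩

lemma mono_mem_pow_iff (d : Fin n → ℕ) (m : ℕ) (β : Fin n → ℕ) :
    mono K β ∈
      (Ideal.span (Set.range fun i : Fin n => mono K (Pi.single i (d i)))) ^ m ↔
    ∃ c : Fin n → ℕ, ∑ i, c i = m ∧ ∀ i, c i * d i ≤ β i := by
  rw [span_pow_eq]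
  have himg : mono K '' powGens d m
      = (fun s : Fin n →₀ ℕ => MvPolynomial.monomial s (1 : K)) ''
          (Finsupp.equivFunOnFinite.symm '' powGens d m) := by
    rw [Set.image_image]; rfl
  rw [himg, mono, MvPolynomial.mem_ideal_span_monomial_image]
  have hsupp : (MvPolynomial.monomial (Finsupp.equivFunOnFinite.symm β)
      (1 : K)).support = {Finsupp.equivFunOnFinite.symm β} := by
    classical
    rw [MvPolynomial.support_monomial, if_neg one_ne_zero]
  rw [hsupp]
  constructor
  · intro h
    obtain ⟨si, ⟨α, ⟨c, hc, rfl⟩, rfl⟩, hle⟩ := h _ (Finset.mem_singleton_self _)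
    exact ⟨c, hc, fun i => by simpa using hle i⟩
  · rintro ⟨c, hc, hle⟩ xi hxi
    rw [Finset.mem_singleton] at hxi
    subst hxi
    refine ⟨_, ⟨fun i => c i * d i, ⟨c, hc, rfl⟩, rfl⟩, ?_⟩
    intro i; simpa using hle i

lemma isMinGen_pow_iff (d : Fin n → ℕ) (hd : ∀ i, 0 < d i) (m : ℕ)
    (α : Fin n → ℕ) :
    IsMinGen
      ((Ideal.span (Set.range fun i : Fin n => mono K (Pi.single i (d i)))) ^ m)
      α ↔
    ∃ c : Fin n → ℕ, ∑ i, c i = m ∧ α = fun i => c i * d i := by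
  constructor
  · rintro ⟨hmem, hmin⟩
    obtain ⟨c, hc, hle⟩ := (mono_mem_pow_iff d m α).mp hmem
    have heq : (fun i => c i * d i) = α :=
      hmin _ ((mono_mem_pow_iff d m _).mpr ⟨c, hc, fun i => le_rfl⟩)
        (fun i => hle i)
    exact ⟨c, hc, heq.symm⟩
  · rintro ⟨c, hc, rfl⟩
    refine ⟨(mono_mem_pow_iff d m _).mpr ⟨c, hc, fun i => le_rfl⟩, ?_⟩
    intro β hβ hβle
    obtain ⟨c', hc', hle'⟩ := (mono_mem_pow_iff d m β).mp hβ
    have hcc : ∀ i, c' i ≤ c i := by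
      intro i
      have h1 : c' i * d i ≤ c i * d i := le_trans (hle' i) (hβle i)
      exact Nat.le_of_mul_le_mul_right h1 (hd i)
    have hceq : c' = c := by
      funext i
      exact (Finset.sum_eq_sum_iff_of_le fun i _ => hcc i).mp
        (hc'.trans hc.symm) i (Finset.mem_univ i)
    funext i
    refine le_antisymm (hβle i) ?_
    rw [← hceq]
    exact hle' i

lemma boxIdeal_power_eq (d : Fin n → ℕ) (hd : ∀ i, 0 < d i) (k : ℕ)
    (a : Fin n → ℕ) :
    boxIdeal ((Ideal.span (Set.range fun i : Fin n =>
        mono K (Pi.single i (d i)))) ^ k) (fun i => k * d i) a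
      = (Ideal.span (Set.range fun i : Fin n => mono K (Pi.single i (d i)))) ^ k := by
  set I := Ideal.span (Set.range fun i : Fin n => mono K (Pi.single i (d i)))
    with hI
  apply le_antisymm
  · rw [boxIdeal, Ideal.span_le]
    rintro _ ⟨α, ⟨hbox, hmin⟩, rfl⟩
    rw [← pow_mul] at hmin
    obtain ⟨c, hc, rfl⟩ := (isMinGen_pow_iff d hd _ α).mp hmin
    have hak : ∀ i, a i * k ≤ c i := by
      intro i
      have h1 := (hbox i).1
      have h2 : a i * k * d i ≤ c i * d i := by
        simpa [mul_assoc] using h1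
      exact Nat.le_of_mul_le_mul_right h2 (hd i)
    have heq : ((fun i => c i * d i) - fun i => a i * (k * d i))
        = fun i => (c i - a i * k) * d i := by
      funext i
      simp [tsub_mul, mul_assoc]
    dsimp only
    rw [heq]
    refine (mono_mem_pow_iff d k _).mpr ⟨fun i => c i - a i * k, ?_, fun i => le_rfl⟩
    have hsum : ∑ i, (c i - a i * k) = (∑ i, c i) - ∑ i, a i * k :=
      Finset.sum_tsub_distrib _ fun i _ => hak i
    rw [hsum, hc, ← Finset.sum_mul]
    have : k * (∑ i, a i + 1) = (∑ i, a i) * k + k := by ring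
    rw [this, Nat.add_sub_cancel_left]
  · conv_lhs => rw [span_pow_eq]
    rw [Ideal.span_le]
    rintro _ ⟨α, ⟨c, hc, rfl⟩, rfl⟩
    rw [boxIdeal]
    apply Ideal.subset_span
    refine ⟨fun i => (c i + a i * k) * d i, ⟨?_, ?_⟩, ?_⟩
    · intro i
      have hck : c i ≤ k := by
        rw [← hc]
        exact Finset.single_le_sum (fun j _ => Nat.zero_le _) (Finset.mem_univ i)
      constructor
      · calc a i * (k * d i) = a i * k * d i := by ring
          _ ≤ (c i + a i * k) * d i := Nat.mul_le_mul_right _ (Nat.le_add_left _ _)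
      · calc (c i + a i * k) * d i ≤ (k + a i * k) * d i :=
            Nat.mul_le_mul_right _ (Nat.add_le_add_right hck _)
          _ = (a i + 1) * (k * d i) := by ring
    · rw [← pow_mul]
      refine (isMinGen_pow_iff d hd _ _).mpr ⟨fun i => c i + a i * k, ?_, rfl⟩
      rw [Finset.sum_add_distrib, hc, ← Finset.sum_mul]
      ring
    · dsimp only
      congr 1
      funext i
      show (c i + a i * k) * d i - a i * (k * d i) = c i * d i
      rw [add_mul, mul_assoc]
      omega

end Aux

/-- Proposition 10.15: for `I = ⟨x_1^{d_1},…,x_n^{d_n}⟩` and every `k ≥ 1`, the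
power `I^k` is good if and only if it is very good (both w.r.t. the boxes of
`I^k`, of sizes `k·d_i`). -/
theorem corner_power_good_iff_veryGood {K : Type*} [Field K] {n : ℕ}
    (d : Fin n → ℕ) (hd : ∀ i, 0 < d i) :
    ∀ k : ℕ, 1 ≤ k →
      (IsGood ((Ideal.span (Set.range fun i : Fin n =>
          mono K (Pi.single i (d i)))) ^ k) (fun i => k * d i) ↔
       IsVeryGood ((Ideal.span (Set.range fun i : Fin n =>
          mono K (Pi.single i (d i)))) ^ k) (fun i => k * d i)) := by
  intro k _hk
  constructor
  · intro hg
    exact ⟨hg, fun a => boxIdeal_power_eq d hd k a⟩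
  · exact fun h => h.1
end GasanovaRR
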